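/- Let G be a connected graph on [n] that has the interval property with respect to its labeling, let H = in_lex(G), and let M = {x_{i_1}, y_{j_1}}, …, {x_{i_m}, y_{j_m}} be an induced matching of H with i_1 < ⋯ < i_m satisfying condition (∗) and with m = indmatch(H). Then for every 1 ≤ s ≤ m−1, the pair {i_s, i_{s+1}} is an edge of G. -/

import Mathlib

open SimpleGraph

/-- `G` has the interval property with respect to its labeling: for every edge `{i,j}`
with `i < j`, every pair `{k,l}` with `i ≤ k < l ≤ j` is an edge of `G`. -/
def HasIntervalProperty {n : ℕ} (G : SimpleGraph (Fin n)) : Prop :=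
  ∀ i j k l : Fin n, G.Adj i j → i < j → i ≤ k → k < l → l ≤ j → G.Adj k l

/-- The bipartite graph `in_lex(G)` on `{x_1,…,x_n} ∪ {y_1,…,y_n}` (here `Sum.inl i = x_i`,
`Sum.inr j = y_j`) whose edges are the pairs `{x_i, y_j}` with `i < j` and `{i,j} ∈ E(G)`. -/
def inLex {n : ℕ} (G : SimpleGraph (Fin n)) : SimpleGraph (Fin n ⊕ Fin n) :=
  SimpleGraph.fromRel (fun u v =>
    ∃ i j : Fin n, i < j ∧ G.Adj i j ∧ u = Sum.inl i ∧ v = Sum.inr j)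

/-- `M` is an induced matching of `H`: a set of edges of `H`, pairwise vertex-disjoint,
such that no edge of `H` joins two vertices lying in distinct edges of `M`. -/
def IsInducedMatching {V : Type*} (H : SimpleGraph V) (M : Set (Sym2 V)) : Prop :=
  M ⊆ H.edgeSet ∧
  (∀ e ∈ M, ∀ f ∈ M, e ≠ f → ∀ v, v ∈ e → v ∉ f) ∧
  (∀ e ∈ M, ∀ f ∈ M, e ≠ f → ∀ u ∈ e, ∀ v ∈ f, ¬ H.Adj u v)

/-- An indexed family of `m` pairwise distinct edges forming an induced matching of `H`. -/
def IsInducedMatchingFamily {V : Type*} (H : SimpleGraph V) {m : ℕ} (f : Fin m → Sym2 V) : Prop :=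
  Function.Injective f ∧ IsInducedMatching H (Set.range f)

/-- `p` is an induced path of length `l` in `G`: `l+1` distinct vertices such that the edges
of `G` among them are exactly the consecutive pairs. -/
def IsInducedPath {V : Type*} (G : SimpleGraph V) (l : ℕ) (p : Fin (l + 1) → V) : Prop :=
  Function.Injective p ∧
  ∀ a b : Fin (l + 1), G.Adj (p a) (p b) ↔ ((a : ℕ) + 1 = b ∨ (b : ℕ) + 1 = a)

/-- `c` is an induced cycle of length `k` in `H`: `k` distinct vertices such that the edges
of `H` among them are exactly the consecutive pairs (cyclically). -/
def IsInducedCycle {V : Type*} (H : SimpleGraph V) (k : ℕ) (c : Fin k → V) : Prop :=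
  3 ≤ k ∧ Function.Injective c ∧
  ∀ a b : Fin k, H.Adj (c a) (c b) ↔ (((a : ℕ) + 1) % k = b ∨ ((b : ℕ) + 1) % k = a)

/-- Condition (∗) for an induced matching `{x_{i t}, y_{j t}}` of `in_lex(G)`: for every
index `a` and vertex `t < i a` with `{t, j a} ∈ E(G)`, replacing `x_{i a}` by `x_t`
does not yield an induced matching of `in_lex(G)`. -/
def CondStar {n m : ℕ} (G : SimpleGraph (Fin n)) (i j : Fin m → Fin n) : Prop :=
  ∀ a : Fin m, ∀ t : Fin n, t < i a → G.Adj t (j a) →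
    ¬ IsInducedMatchingFamily (inLex G)
        (fun u => if u = a then s(Sum.inl t, Sum.inr (j u))
                  else s(Sum.inl (i u), Sum.inr (j u)))

open Sum

lemma inLex_adj_iff {n : ℕ} {G : SimpleGraph (Fin n)} {p q : Fin n} :
    (inLex G).Adj (inl p) (inr q) ↔ p < q ∧ G.Adj p q := by
  rw [inLex, fromRel_adj]
  constructor
  · rintro ⟨-, ⟨i', j', h1, h2, h3, h4⟩ | ⟨i', j', h1, h2, h3, h4⟩⟩
    · injection h3 with h3; injection h4 with h4; subst h3; subst h4; exact ⟨h1, h2⟩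
    · exact absurd h3 (by simp)
  · rintro ⟨h1, h2⟩
    exact ⟨by simp, Or.inl ⟨p, q, h1, h2, rfl, rfl⟩⟩

lemma inLex_not_adj_ll {n : ℕ} {G : SimpleGraph (Fin n)} {p q : Fin n} :
    ¬ (inLex G).Adj (inl p) (inl q) := by
  rw [inLex, fromRel_adj]
  rintro ⟨-, ⟨i', j', h1, h2, h3, h4⟩ | ⟨i', j', h1, h2, h3, h4⟩⟩ <;> simp at h3 h4

lemma inLex_not_adj_rr {n : ℕ} {G : SimpleGraph (Fin n)} {p q : Fin n} :
    ¬ (inLex G).Adj (inr p) (inr q) := by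
  rw [inLex, fromRel_adj]
  rintro ⟨-, ⟨i', j', h1, h2, h3, h4⟩ | ⟨i', j', h1, h2, h3, h4⟩⟩ <;> simp at h3 h4

lemma fam_lemma {n m : ℕ} (G : SimpleGraph (Fin n)) (I J : Fin m → Fin n)
    (h1 : ∀ u, I u < J u ∧ G.Adj (I u) (J u))
    (h2 : ∀ u u', u ≠ u' → J u ≠ J u')
    (h3 : ∀ u u', u ≠ u' → ¬(I u < J u' ∧ G.Adj (I u) (J u'))) :
    IsInducedMatchingFamily (inLex G) (fun u => s(Sum.inl (I u), Sum.inr (J u))) := by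
  have hI : ∀ u u', u ≠ u' → I u ≠ I u' := by
    intro u u' h he
    exact h3 u u' h (he ▸ h1 u')
  constructor
  · intro u u' he
    by_contra hne
    simp only [Sym2.eq, Sym2.rel_iff', Prod.mk.injEq, Prod.swap_prod_mk] at he
    rcases he with ⟨ha, hb⟩ | ⟨ha, hb⟩
    · injection hb with hb; exact h2 u u' hne hb
    · exact absurd ha (by simp)
  refine ⟨?_, ?_, ?_⟩
  · rintro e ⟨u, rfl⟩
    exact mem_edgeSet _ |>.mpr (inLex_adj_iff.mpr (h1 u))
  · rintro e ⟨u, rfl⟩ f ⟨u', rfl⟩ hef v hv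
    have huu' : u ≠ u' := by rintro rfl; exact hef rfl
    simp only [Sym2.mem_iff] at hv
    rcases hv with rfl | rfl <;> simp only [Sym2.mem_iff] <;> push_neg
    · exact ⟨fun h => hI u u' huu' (inl.inj h), fun h => nomatch h⟩
    · exact ⟨fun h => (nomatch h), fun h => h2 u u' huu' (inr.inj h)⟩
  · rintro e ⟨u, rfl⟩ f ⟨u', rfl⟩ hef v1 hv1 v2 hv2
    have huu' : u ≠ u' := by rintro rfl; exact hef rfl
    simp only [Sym2.mem_iff] at hv1 hv2
    rcases hv1 with rfl | rfl <;> rcases hv2 with rfl | rfl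
    · exact inLex_not_adj_ll
    · exact fun h => h3 u u' huu' (inLex_adj_iff.mp h)
    · exact fun h => h3 u' u huu'.symm (inLex_adj_iff.mp h.symm)
    · exact inLex_not_adj_rr

lemma cross_lemma {n : ℕ} {G : SimpleGraph (Fin n)} (k : Fin n) :
    ∀ {u v : Fin n}, G.Walk u v → u ≤ k → k < v →
      ∃ x y : Fin n, G.Adj x y ∧ x ≤ k ∧ k < y := by
  intro u v w
  induction w with
  | nil => intro h1 h2; exact absurd (h1.trans_lt h2) (lt_irrefl _)
  | @cons a c v hac w ih =>
    intro h1 h2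
    by_cases hc : c ≤ k
    · exact ih hc h2
    · exact ⟨a, c, hac, h1, not_le.mp hc⟩

lemma consec_adj {n : ℕ} {G : SimpleGraph (Fin n)} (hconn : G.Connected)
    (hG : HasIntervalProperty G) {x y : Fin n} (h : (x : ℕ) + 1 = (y : ℕ)) :
    G.Adj x y := by
  have hxy : x < y := by rw [Fin.lt_def]; omega
  obtain ⟨w⟩ := hconn.preconnected x y
  obtain ⟨x0, y0, hadj, hx0, hy0⟩ := cross_lemma x w le_rfl hxy
  refine hG x0 y0 x y hadj (hx0.trans_lt hy0) hx0 hxy ?_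
  rw [Fin.le_def]; rw [Fin.lt_def] at hy0; omega

/-- If `G` is connected with the interval property and `{x_{i_1}, y_{j_1}}, …,
{x_{i_m}, y_{j_m}}` is an induced matching of `in_lex(G)` with `i_1 < ⋯ < i_m` satisfying
(∗) and `m = indmatch(in_lex(G))`, then `{i_a, i_{a+1}} ∈ E(G)` for all `a`. -/
theorem stmt_12 {n m : ℕ} (G : SimpleGraph (Fin n)) (hconn : G.Connected)
    (hG : HasIntervalProperty G)
    (i j : Fin m → Fin n) (hmono : StrictMono i)
    (hM : IsInducedMatchingFamily (inLex G)
      (fun t => s(Sum.inl (i t), Sum.inr (j t))))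
    (hstar : CondStar G i j)
    (hm : IsGreatest {k : ℕ | ∃ M : Set (Sym2 (Fin n ⊕ Fin n)),
            IsInducedMatching (inLex G) M ∧ M.ncard = k} m) :
    ∀ a b : Fin m, (a : ℕ) + 1 = b → G.Adj (i a) (i b) := by
  intro a b hab
  by_contra hadj
  have hab' : a < b := by rw [Fin.lt_def]; omega
  obtain ⟨hinj, hsub, hdisj, hind⟩ := hM
  have hE1 : ∀ u, i u < j u ∧ G.Adj (i u) (j u) := by
    intro u
    exact inLex_adj_iff.mp ((mem_edgeSet _).mp (hsub ⟨u, rfl⟩))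
  have hE2 : ∀ u u', u ≠ u' → ¬(i u < j u' ∧ G.Adj (i u) (j u')) := by
    intro u u' h hcon
    exact hind _ ⟨u, rfl⟩ _ ⟨u', rfl⟩ (fun he => h (hinj he)) (inl (i u)) (by simp)
      (inr (j u')) (by simp) (inLex_adj_iff.mpr hcon)
  have hjne : ∀ u u', u ≠ u' → j u ≠ j u' := by
    intro u u' h hj
    exact hdisj _ ⟨u, rfl⟩ _ ⟨u', rfl⟩ (fun he => h (hinj he)) (inr (j u)) (by simp)
      (by simp [hj])
  have hD1 : ∀ u u' : Fin m, u < u' → j u ≤ i u' := by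
    intro u u' h
    by_contra hlt
    rw [not_le] at hlt
    have h1 := hE1 u
    have : G.Adj (i u') (j u) := hG (i u) (j u) (i u') (j u) h1.2 h1.1 (hmono h).le hlt le_rfl
    exact hE2 u' u (ne_of_gt h) ⟨hlt, this⟩
  have hja_lt : j a < i b := by
    rcases lt_or_eq_of_le (hD1 a b hab') with h | h
    · exact h
    · exact absurd (h ▸ (hE1 a).2) hadj
  have hjmono_le : ∀ u, u ≤ a → j u ≤ j a := by
    intro u hu
    rcases eq_or_lt_of_le hu with rfl | hlt
    · exact le_rfl
    · exact (hD1 u a hlt).trans (hE1 a).1.le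
  have hjb_gt : ∀ u, b ≤ u → i b < j u := by
    intro u hu
    rcases eq_or_lt_of_le hu with rfl | hlt
    · exact (hE1 b).1
    · exact (hE1 b).1.trans ((hD1 b u hlt).trans_lt (hE1 u).1)
  have hlt_b_le_a : ∀ u : Fin m, u < b → u ≤ a := by
    intro u hu; rw [Fin.le_def]; rw [Fin.lt_def] at hu; omega
  by_cases hc : ∃ t : Fin n, j a ≤ t ∧ t < i b ∧ G.Adj t (j b)
  · obtain ⟨t, ht1, ht2, ht3⟩ := hc
    apply hstar b t ht2 ht3
    have key := fam_lemma G (fun u => if u = b then t else i u) j ?_ ?_ ?_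
    · have heq : (fun u => if u = b then s(Sum.inl t, Sum.inr (j u))
                  else s(Sum.inl (i u), Sum.inr (j u)))
          = (fun u => s(Sum.inl (if u = b then t else i u), Sum.inr (j u))) := by
        funext u; by_cases h : u = b <;> simp [h]
      rw [heq]; exact key
    · intro u
      by_cases h : u = b
      · subst h; simp only [if_pos rfl]
        exact ⟨ht2.trans (hE1 u).1, ht3⟩
      · simp only [if_neg h]; exact hE1 u
    · exact hjne
    · intro u u' huu'
      by_cases hu : u = b
      · subst hu
        simp only [if_pos rfl]
        rintro ⟨hlt, hadj'⟩
        rcases lt_trichotomy u' u with h' | h' | h'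
        · have hle : j u' ≤ t := (hjmono_le u' (hlt_b_le_a u' h')).trans ht1
          exact absurd hlt (not_lt.mpr hle)
        · exact huu' h'.symm
        · have hib : i u < j u' := hjb_gt u' h'.le
          have : G.Adj (i u) (j u') := hG t (j u') (i u) (j u') hadj' hlt ht2.le hib le_rfl
          exact hE2 u u' (ne_of_lt h') ⟨hib, this⟩
      · simp only [if_neg hu]; exact hE2 u u' huu'
  · push_neg at hc
    have hibn : 0 < (i b : ℕ) := by
      have := hmono hab'; rw [Fin.lt_def] at this; omega
    have hpn : (i b : ℕ) - 1 < n := by omega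
    set p : Fin n := ⟨(i b : ℕ) - 1, hpn⟩ with hp
    have hp1 : (p : ℕ) + 1 = (i b : ℕ) := by simp [hp]; omega
    have hpadj : G.Adj p (i b) := consec_adj hconn hG hp1
    have hpib : p < i b := by rw [Fin.lt_def]; omega
    have hjap : j a ≤ p := by
      rw [Fin.le_def]; rw [Fin.lt_def] at hja_lt; simp [hp]; omega
    have key := fam_lemma G (Fin.snoc i p) (Fin.snoc j (i b)) ?_ ?_ ?_
    · obtain ⟨kinj, kmatch⟩ := key
      have hmem : (m + 1) ∈ {k : ℕ | ∃ M : Set (Sym2 (Fin n ⊕ Fin n)),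
            IsInducedMatching (inLex G) M ∧ M.ncard = k} := by
        refine ⟨Set.range _, kmatch, ?_⟩
        rw [← Nat.card_coe_set_eq, Nat.card_range_of_injective kinj]
        simp
      have := hm.2 hmem
      omega
    · intro u
      induction u using Fin.lastCases with
      | last => simp only [Fin.snoc_last]; exact ⟨hpib, hpadj⟩
      | cast v => simp only [Fin.snoc_castSucc]; exact hE1 v
    · intro u u' huu'
      induction u using Fin.lastCases with
      | last =>
        induction u' using Fin.lastCases with
        | last => exact absurd rfl huu'
        | cast v =>
          simp only [Fin.snoc_last, Fin.snoc_castSucc]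
          rcases lt_or_ge v b with h | h
          · exact fun he => absurd (he ▸ hja_lt) (not_lt.mpr (hjmono_le v (hlt_b_le_a v h)))
          · exact (hjb_gt v h).ne
      | cast v =>
        induction u' using Fin.lastCases with
        | last =>
          simp only [Fin.snoc_last, Fin.snoc_castSucc]
          rcases lt_or_ge v b with h | h
          · exact fun he => absurd (he ▸ hja_lt) (not_lt.mpr (hjmono_le v (hlt_b_le_a v h)))
          · exact ((hjb_gt v h).ne).symm
        | cast v' =>
          simp only [Fin.snoc_castSucc]
          exact hjne v v' (fun h => huu' (by rw [h]))
    · intro u u' huu'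
      induction u using Fin.lastCases with
      | last =>
        induction u' using Fin.lastCases with
        | last => exact absurd rfl huu'
        | cast v =>
          simp only [Fin.snoc_last, Fin.snoc_castSucc]
          rcases lt_trichotomy v b with h | h | h
          · rintro ⟨hlt, -⟩
            exact absurd hlt (not_lt.mpr ((hjmono_le v (hlt_b_le_a v h)).trans hjap))
          · subst h
            rintro ⟨-, hadj'⟩
            exact hc p hjap hpib hadj'
          · rintro ⟨hlt, hadj'⟩
            have hib : i b < j v := hjb_gt v h.le
            have : G.Adj (i b) (j v) := hG p (j v) (i b) (j v) hadj' hlt hpib.le hib le_rfl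
            exact hE2 b v (ne_of_lt h) ⟨hib, this⟩
      | cast v =>
        induction u' using Fin.lastCases with
        | last =>
          simp only [Fin.snoc_last, Fin.snoc_castSucc]
          rcases lt_trichotomy v a with h | h | h
          · rintro ⟨hlt, hadj'⟩
            exact hadj (hG (i v) (i b) (i a) (i b) hadj' hlt (hmono.monotone h.le)
              (hmono hab') le_rfl)
          · subst h
            rintro ⟨-, hadj'⟩
            exact hadj hadj'
          · have hbv : b ≤ v := by rw [Fin.le_def]; rw [Fin.lt_def] at h; omega
            rintro ⟨hlt, -⟩
            exact absurd hlt (not_lt.mpr (hmono.monotone hbv))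
        | cast v' =>
          simp only [Fin.snoc_castSucc]
          exact hE2 v v' (fun h => huu' (by rw [h]))
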